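/- arXiv:2308.13776 — 4 statements merged into one kernel-verified Lean document; each statement's English description precedes it below -/
import Mathlib

section
/- If x̄ is a stationary point of F, i.e. 0 ∈ ∇f(x̄) + ∂g(x̄), then for every γ > 0 and every self-adjoint positive definite linear operator 𝒟 on 𝕏 one has ∇F_{γ,𝒟}(x̄) = 0 and F_{γ,𝒟}(x̄) = F(x̄). -/
open Set Filter
open scoped RealInnerProductSpace ENNReal

noncomputable section

attribute [local instance] Classical.propDecidable

variable {X : Type*} [NormedAddCommGroup X] [InnerProductSpace ℝ X] [FiniteDimensional ℝ X]

/-- `g` extended by `+∞` outside its domain `s`. -/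
def extE (g : X → ℝ) (s : Set X) (x : X) : EReal := if x ∈ s then (g x : EReal) else ⊤

/-- The objective `F = f + g`, extended-real valued. -/
def FE (f g : X → ℝ) (s : Set X) (x : X) : EReal := (f x : EReal) + extE g s x

/-- `φ_{γ,D}(x) = (1/(2γ)) ⟪ x, D x ⟫ - f x`. -/
def phiGD (γ : ℝ) (D : X →L[ℝ] X) (f : X → ℝ) (x : X) : ℝ :=
  (1 / (2 * γ)) * ⟪x, D x⟫ - f x

/-- `∇φ_{γ,D}(x) = γ⁻¹ D x - ∇f x`. -/
def phiGDgrad (γ : ℝ) (D : X →L[ℝ] X) (fgrad : X → X) (x : X) : X :=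
  (1 / γ) • D x - fgrad x

/-- Bregman function `B_{γ,D}(y, x)`, equal to `+∞` when `x ∉ cl (dom g)`. -/
def BregE (γ : ℝ) (D : X →L[ℝ] X) (f : X → ℝ) (fgrad : X → X) (s : Set X)
    (y x : X) : EReal :=
  if x ∈ closure s then
    ((phiGD γ D f y - phiGD γ D f x - ⟪phiGDgrad γ D fgrad x, y - x⟫ : ℝ) : EReal)
  else ⊤

/-- `G_{γ,D}(x, y) = F(y) + B_{γ,D}(y, x)`. -/
def GE (γ : ℝ) (D : X →L[ℝ] X) (f : X → ℝ) (fgrad : X → X) (g : X → ℝ) (s : Set X)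
    (x y : X) : EReal := FE f g s y + BregE γ D f fgrad s y x

/-- The forward-backward envelope `F_{γ,D}(x) = inf_y G_{γ,D}(x, y)`. -/
def FBenvE (γ : ℝ) (D : X →L[ℝ] X) (f : X → ℝ) (fgrad : X → X) (g : X → ℝ) (s : Set X)
    (x : X) : EReal := ⨅ y : X, GE γ D f fgrad g s x y

/-- The convex subdifferential of (the extension by `+∞` of) `g` at `x`. -/
def SubdiffAt (g : X → ℝ) (s : Set X) (x : X) : Set X :=
  {v : X | x ∈ s ∧ ∀ z ∈ s, g x + ⟪v, z - x⟫ ≤ g z}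

/-- `x` is a stationary point of `F = f + g`, i.e. `0 ∈ ∇f(x) + ∂g(x)`. -/
def IsStationaryFB (fgrad : X → X) (g : X → ℝ) (s : Set X) (x : X) : Prop :=
  -fgrad x ∈ SubdiffAt g s x

lemma breg_formula (γ : ℝ) (D : X →L[ℝ] X) (f : X → ℝ) (fgrad : X → X)
    (hDsa : ∀ u v : X, ⟪D u, v⟫ = ⟪u, D v⟫) (x y : X) :
    phiGD γ D f y - phiGD γ D f x - ⟪phiGDgrad γ D fgrad x, y - x⟫
      = f x - f y + ⟪fgrad x, y - x⟫ + (1/(2*γ)) * ⟪y - x, D (y - x)⟫ := by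
  have h1 : ⟪y, D x⟫ = ⟪x, D y⟫ := by rw [real_inner_comm]; exact hDsa x y
  have h2 : ⟪D x, y⟫ = ⟪x, D y⟫ := hDsa x y
  have h3 : ⟪D x, x⟫ = ⟪x, D x⟫ := hDsa x x
  simp only [phiGD, phiGDgrad, map_sub, inner_sub_left, inner_sub_right,
    real_inner_smul_left, h1, h2, h3]
  ring

lemma lam_exists (D : X →L[ℝ] X) (hDpd : ∀ u : X, u ≠ 0 → 0 < ⟪u, D u⟫) :
    ∃ lam : ℝ, 0 < lam ∧ ∀ u : X, lam * ‖u‖^2 ≤ ⟪u, D u⟫ := by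
  rcases subsingleton_or_nontrivial X with h | h
  · exact ⟨1, one_pos, fun u => by rw [Subsingleton.elim u 0]; simp⟩
  · have hsph : (Metric.sphere (0:X) 1).Nonempty := NormedSpace.sphere_nonempty.2 zero_le_one
    have hcpt : IsCompact (Metric.sphere (0:X) 1) := isCompact_sphere _ _
    have hcont : Continuous fun u : X => ⟪u, D u⟫ :=
      continuous_id.inner (D.continuous)
    obtain ⟨u0, hu0, hmin⟩ := hcpt.exists_isMinOn hsph hcont.continuousOn
    have hu0n : ‖u0‖ = 1 := by simpa using hu0
    have hu0ne : u0 ≠ 0 := by intro h0; rw [h0] at hu0n; simp at hu0n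
    refine ⟨⟪u0, D u0⟫, hDpd u0 hu0ne, fun u => ?_⟩
    rcases eq_or_ne u 0 with rfl | hu
    · simp
    · set v := ‖u‖⁻¹ • u with hv
      have hnu : ‖u‖ ≠ 0 := norm_ne_zero_iff.2 hu
      have hvn : v ∈ Metric.sphere (0:X) 1 := by
        simp [hv, norm_smul, abs_of_nonneg (inv_nonneg.2 (norm_nonneg u)),
          inv_mul_cancel₀ hnu]
      have := hmin hvn
      have hexp : ‖u‖^2 * ⟪v, D v⟫ = ⟪u, D u⟫ := by
        rw [hv, map_smul, real_inner_smul_left, real_inner_smul_right]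
        field_simp
      have h4 : ‖u‖^2 * ⟪u0, D u0⟫ ≤ ‖u‖^2 * ⟪v, D v⟫ :=
        mul_le_mul_of_nonneg_left this (sq_nonneg _)
      linarith [h4, hexp]

set_option maxHeartbeats 2000000 in
/-- at a stationary point `x̄` of `F`, `∇F_{γ,D}(x̄) = 0` and
`F_{γ,D}(x̄) = F(x̄)`. -/
theorem fbe_at_stationary
    (f g : X → ℝ) (domg O : Set X) (fgrad : X → X)
    (hdom : domg.Nonempty) (hO : IsOpen O) (hclO : closure domg ⊆ O)
    (hgconv : ConvexOn ℝ domg g) (hgcont : ContinuousOn g domg)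
    (hglsc : LowerSemicontinuous (extE g domg))
    (hflsc : LowerSemicontinuous f)
    (hfC2 : ContDiffOn ℝ 2 f O)
    (hfgrad : ∀ z ∈ O, HasGradientAt f (fgrad z) z)
    (hFlb : ∃ c : ℝ, ∀ z ∈ domg, c ≤ f z + g z)
    (xb : X) (hstat : IsStationaryFB fgrad g domg xb)
    (γ : ℝ) (hγ : 0 < γ) (D : X →L[ℝ] X)
    (hDsa : ∀ u v : X, ⟪D u, v⟫ = ⟪u, D v⟫)
    (hDpd : ∀ u : X, u ≠ 0 → 0 < ⟪u, D u⟫)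
    :
    FBenvE γ D f fgrad g domg xb = FE f g domg xb ∧
    ∀ Fenv : X → ℝ, (∀ z ∈ closure domg, (Fenv z : EReal) = FBenvE γ D f fgrad g domg z) →
      HasGradientWithinAt Fenv (0 : X) (closure domg) xb := by
  obtain ⟨hxb_mem, hsub⟩ := hstat
  have hxb_cl : xb ∈ closure domg := subset_closure hxb_mem
  have hxbO : xb ∈ O := hclO hxb_cl
  have hquad : ∀ u : X, 0 ≤ ⟪u, D u⟫ := by
    intro u
    rcases eq_or_ne u 0 with rfl | hu
    · simp
    · exact (hDpd u hu).le
  have hFExb : FE f g domg xb = ((f xb + g xb : ℝ) : EReal) := by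
    rw [FE, extE, if_pos hxb_mem, ← EReal.coe_add]
  have hGEcoe : ∀ x y : X, x ∈ closure domg → y ∈ domg →
      GE γ D f fgrad g domg x y
        = (((f y + g y) + (f x - f y + ⟪fgrad x, y - x⟫
            + (1/(2*γ)) * ⟪y - x, D (y - x)⟫) : ℝ) : EReal) := by
    intro x y hx hy
    rw [GE, FE, extE, if_pos hy, BregE, if_pos hx,
      breg_formula γ D f fgrad hDsa x y, ← EReal.coe_add, ← EReal.coe_add]
  have hGEtop : ∀ x y : X, x ∈ closure domg → y ∉ domg →
      GE γ D f fgrad g domg x y = ⊤ := by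
    intro x y hx hy
    rw [GE, FE, extE, if_neg hy, BregE, if_pos hx]
    rw [EReal.coe_add_top, EReal.top_add_coe]
  have key1 : FBenvE γ D f fgrad g domg xb = FE f g domg xb := by
    apply le_antisymm
    · calc FBenvE γ D f fgrad g domg xb ≤ GE γ D f fgrad g domg xb xb := iInf_le _ xb
        _ = FE f g domg xb := by
            rw [hGEcoe xb xb hxb_cl hxb_mem, hFExb]
            simp
    · apply le_iInf
      intro y
      by_cases hy : y ∈ domg
      · rw [hGEcoe xb y hxb_cl hy, hFExb, EReal.coe_le_coe_iff]
        have h1 := hsub y hy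
        rw [inner_neg_left] at h1
        have h2 : 0 ≤ (1/(2*γ)) * ⟪y - xb, D (y - xb)⟫ :=
          mul_nonneg (by positivity) (hquad _)
        linarith
      · rw [hGEtop xb y hxb_cl hy]
        exact le_top
  refine ⟨key1, ?_⟩
  intro Fenv hFenv
  have hFxb : Fenv xb = f xb + g xb := by
    have h := hFenv xb hxb_cl
    rw [key1, hFExb] at h
    exact_mod_cast h
  -- identification of the Fréchet derivative of f
  have hfd : ∀ z ∈ O, fderiv ℝ f z = (InnerProductSpace.toDual ℝ X) (fgrad z) :=
    fun z hz => ((hfgrad z hz).hasFDerivAt).fderiv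
  -- local Lipschitz property of the gradient
  have hC1 : ContDiffOn ℝ 1 (fderiv ℝ f) O := hfC2.fderiv_of_isOpen hO (by norm_num)
  have hCA : ContDiffAt ℝ 1 (fderiv ℝ f) xb := hC1.contDiffAt (hO.mem_nhds hxbO)
  obtain ⟨K, t, ht, hlip⟩ := hCA.exists_lipschitzOnWith
  obtain ⟨r, hr, hball⟩ : ∃ r > 0, Metric.ball xb r ⊆ t ∩ O := by
    have h1 : t ∩ O ∈ nhds xb := Filter.inter_mem ht (hO.mem_nhds hxbO)
    exact Metric.mem_nhds_iff.1 h1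
  have hgradlip : ∀ z ∈ Metric.ball xb r, ∀ w ∈ Metric.ball xb r,
      ‖fgrad z - fgrad w‖ ≤ K * ‖z - w‖ := by
    intro z hz w hw
    have h1 := hlip.dist_le_mul z (hball hz).1 w (hball hw).1
    rw [dist_eq_norm, dist_eq_norm, hfd z (hball hz).2, hfd w (hball hw).2,
      ← map_sub] at h1
    rwa [(InnerProductSpace.toDual ℝ X).norm_map] at h1
  -- Taylor-type quadratic bound
  have hTaylor : ∀ z ∈ Metric.ball xb r,
      |f z - f xb - ⟪fgrad xb, z - xb⟫| ≤ K * ‖z - xb‖^2 := by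
    intro z hz
    set s1 : Set X := Metric.closedBall xb ‖z - xb‖ with hs1
    have hs1sub : s1 ⊆ Metric.ball xb r := by
      intro w hw
      rw [hs1, Metric.mem_closedBall] at hw
      rw [Metric.mem_ball]
      calc dist w xb ≤ ‖z - xb‖ := hw
        _ = dist z xb := (dist_eq_norm z xb).symm
        _ < r := hz
    have hderiv : ∀ y ∈ s1, HasFDerivWithinAt (fun w => f w - ⟪fgrad xb, w⟫)
        ((InnerProductSpace.toDual ℝ X) (fgrad y)
          - (InnerProductSpace.toDual ℝ X) (fgrad xb)) s1 y := by
      intro y hy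
      have h1 : HasFDerivAt f ((InnerProductSpace.toDual ℝ X) (fgrad y)) y :=
        (hfgrad y ((hball (hs1sub hy)).2)).hasFDerivAt
      have heq : (fun w : X => (⟪fgrad xb, w⟫ : ℝ))
          = ⇑((InnerProductSpace.toDual ℝ X) (fgrad xb)) := by
        ext w; simp [InnerProductSpace.toDual_apply_apply]
      have h2 : HasFDerivAt (fun w : X => (⟪fgrad xb, w⟫ : ℝ))
          ((InnerProductSpace.toDual ℝ X) (fgrad xb)) y := by
        rw [heq]; exact ((InnerProductSpace.toDual ℝ X) (fgrad xb)).hasFDerivAt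
      exact (h1.sub h2).hasFDerivWithinAt
    have hbound : ∀ y ∈ s1, ‖(InnerProductSpace.toDual ℝ X) (fgrad y)
        - (InnerProductSpace.toDual ℝ X) (fgrad xb)‖ ≤ K * ‖z - xb‖ := by
      intro y hy
      rw [← map_sub, (InnerProductSpace.toDual ℝ X).norm_map]
      have hy2 : ‖y - xb‖ ≤ ‖z - xb‖ := by
        rw [hs1, Metric.mem_closedBall, dist_eq_norm] at hy; exact hy
      calc ‖fgrad y - fgrad xb‖ ≤ K * ‖y - xb‖ :=
            hgradlip y (hs1sub hy) xb (Metric.mem_ball_self hr)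
        _ ≤ K * ‖z - xb‖ := by gcongr
    have hmem_xb : xb ∈ s1 := Metric.mem_closedBall_self (norm_nonneg _)
    have hmem_z : z ∈ s1 := by rw [hs1, Metric.mem_closedBall, dist_eq_norm]
    have hmvt := (convex_closedBall xb ‖z - xb‖).norm_image_sub_le_of_norm_hasFDerivWithin_le
      hderiv hbound hmem_xb hmem_z
    calc |f z - f xb - ⟪fgrad xb, z - xb⟫|
        = ‖(f z - ⟪fgrad xb, z⟫) - (f xb - ⟪fgrad xb, xb⟫)‖ := by
          rw [Real.norm_eq_abs]
          congr 1
          rw [inner_sub_right]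
          ring
      _ ≤ K * ‖z - xb‖ * ‖z - xb‖ := hmvt
      _ = K * ‖z - xb‖^2 := by ring
  -- positive definiteness constant
  obtain ⟨lam, hlam_pos, hlam⟩ := lam_exists D hDpd
  have hc : (0:ℝ) < 1/(2*γ) := by positivity
  set m : ℝ := (1/(2*γ)) * lam with hm_def
  have hm : 0 < m := mul_pos hc hlam_pos
  set β : ℝ := (K:ℝ)^2 / (4*m) with hβ_def
  have hβ : 0 ≤ β := by positivity
  have hβeq : 4*m*β = (K:ℝ)^2 := by
    rw [hβ_def]; field_simp
  set C : ℝ := 2*(K:ℝ) + (1/(2*γ))*‖D‖ + (K:ℝ) + β with hC_def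
  have hC0 : 0 ≤ C := by positivity
  -- main quadratic estimate
  have hmain : ∀ z ∈ closure domg, z ∈ Metric.ball xb r →
      |Fenv z - Fenv xb| ≤ C * ‖z - xb‖^2 := by
    intro z hzc hzb
    have hd0 : (0:ℝ) ≤ ‖z - xb‖ := norm_nonneg _
    -- upper bound
    have hup : Fenv z ≤ f xb + g xb + (2*(K:ℝ) + (1/(2*γ))*‖D‖) * ‖z - xb‖^2 := by
      have h1 : FBenvE γ D f fgrad g domg z ≤ GE γ D f fgrad g domg z xb := iInf_le _ xb
      rw [hGEcoe z xb hzc hxb_mem, ← hFenv z hzc] at h1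
      have h2 : Fenv z ≤ (f xb + g xb) + (f z - f xb + ⟪fgrad z, xb - z⟫
          + (1/(2*γ)) * ⟪xb - z, D (xb - z)⟫) := EReal.coe_le_coe_iff.1 h1
      have hT2 : f z - f xb - ⟪fgrad xb, z - xb⟫ ≤ K * ‖z - xb‖^2 :=
        (abs_le.1 (hTaylor z hzb)).2
      have hK1 : ‖fgrad xb - fgrad z‖ ≤ K * ‖z - xb‖ := by
        have h3 := hgradlip xb (Metric.mem_ball_self hr) z hzb
        rwa [norm_sub_rev xb z] at h3
      have hcs : ⟪fgrad xb - fgrad z, z - xb⟫ ≤ K * ‖z - xb‖^2 := by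
        have h4 := (abs_le.1 (abs_real_inner_le_norm (fgrad xb - fgrad z) (z - xb))).2
        nlinarith [norm_nonneg (z - xb)]
      have hqb : (1/(2*γ)) * ⟪xb - z, D (xb - z)⟫ ≤ (1/(2*γ)) * (‖D‖ * ‖z - xb‖^2) := by
        apply mul_le_mul_of_nonneg_left _ hc.le
        calc (⟪xb - z, D (xb - z)⟫:ℝ) ≤ ‖xb - z‖ * ‖D (xb - z)‖ := real_inner_le_norm _ _
          _ ≤ ‖xb - z‖ * (‖D‖ * ‖xb - z‖) := by
              gcongr
              exact D.le_opNorm _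
          _ = ‖D‖ * ‖z - xb‖^2 := by rw [norm_sub_rev]; ring
      have hid : f z - f xb + ⟪fgrad z, xb - z⟫
          = (f z - f xb - ⟪fgrad xb, z - xb⟫) + ⟪fgrad xb - fgrad z, z - xb⟫ := by
        rw [show xb - z = -(z - xb) from (neg_sub z xb).symm, inner_neg_right]
        simp only [inner_sub_left]
        ring
      nlinarith [h2, hT2, hcs, hqb, hid]
    -- lower bound
    have hlo : f xb + g xb - ((K:ℝ) + β) * ‖z - xb‖^2 ≤ Fenv z := by
      have h1 : ((f xb + g xb - ((K:ℝ) + β) * ‖z - xb‖^2 : ℝ) : EReal)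
          ≤ FBenvE γ D f fgrad g domg z := by
        apply le_iInf
        intro y
        by_cases hy : y ∈ domg
        · rw [hGEcoe z y hzc hy, EReal.coe_le_coe_iff]
          have hS := hsub y hy
          rw [inner_neg_left] at hS
          have hT2 : -((K:ℝ) * ‖z - xb‖^2) ≤ f z - f xb - ⟪fgrad xb, z - xb⟫ :=
            (abs_le.1 (hTaylor z hzb)).1
          have he : ‖fgrad z - fgrad xb‖ ≤ K * ‖z - xb‖ :=
            hgradlip z hzb xb (Metric.mem_ball_self hr)
          have hcs : -(‖fgrad z - fgrad xb‖ * ‖y - z‖) ≤ ⟪fgrad z - fgrad xb, y - z⟫ :=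
            (abs_le.1 (abs_real_inner_le_norm _ _)).1
          have hQ : m * ‖y - z‖^2 ≤ (1/(2*γ)) * ⟪y - z, D (y - z)⟫ := by
            rw [hm_def, mul_assoc]
            exact mul_le_mul_of_nonneg_left (hlam (y - z)) hc.le
          have hkey : ‖fgrad z - fgrad xb‖ * ‖y - z‖ ≤ m * ‖y - z‖^2 + β * ‖z - xb‖^2 := by
            nlinarith [sq_nonneg (2*m*‖y - z‖ - ‖fgrad z - fgrad xb‖), he,
              norm_nonneg (y - z), norm_nonneg (fgrad z - fgrad xb), hm, hd0, hβeq]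
          have hid2 : ⟪fgrad z, y - z⟫ = ⟪fgrad z - fgrad xb, y - z⟫
              + ⟪fgrad xb, y - xb⟫ - ⟪fgrad xb, z - xb⟫ := by
            simp only [inner_sub_left, inner_sub_right]
            ring
          linarith [hS, hT2, hcs, hQ, hkey, hid2]
        · rw [hGEtop z y hzc hy]
          exact le_top
      rw [← hFenv z hzc] at h1
      exact EReal.coe_le_coe_iff.1 h1
    have hA : (0:ℝ) ≤ 2*(K:ℝ) + 1/(2*γ)*‖D‖ := by
      have := mul_nonneg hc.le (norm_nonneg (D : X →L[ℝ] X))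
      have := K.coe_nonneg
      linarith
    have hB : (0:ℝ) ≤ (K:ℝ) + β := add_nonneg K.coe_nonneg hβ
    rw [hFxb, abs_le, hC_def]
    constructor
    · nlinarith [hlo, mul_nonneg hA (sq_nonneg ‖z - xb‖)]
    · nlinarith [hup, mul_nonneg hB (sq_nonneg ‖z - xb‖)]
  -- conclude the gradient statement
  have hlittle : (fun z => Fenv z - Fenv xb - (0 : X →L[ℝ] ℝ) (z - xb))
      =o[nhdsWithin xb (closure domg)] fun z => z - xb := by
    rw [Asymptotics.isLittleO_iff]
    intro ε hε
    have hδ : 0 < min r (ε/(C+1)) := lt_min hr (by positivity)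
    filter_upwards [mem_nhdsWithin_of_mem_nhds (Metric.ball_mem_nhds xb hδ),
      self_mem_nhdsWithin] with z hz1 hz2
    have hzb : z ∈ Metric.ball xb r :=
      Metric.ball_subset_ball (min_le_left _ _) hz1
    have hzd : ‖z - xb‖ ≤ ε/(C+1) := by
      have := Metric.mem_ball.1 hz1
      rw [dist_eq_norm] at this
      exact le_trans this.le (min_le_right _ _)
    have hb := hmain z hz2 hzb
    have hd0 : (0:ℝ) ≤ ‖z - xb‖ := norm_nonneg _
    simp only [ContinuousLinearMap.zero_apply, sub_zero, Real.norm_eq_abs]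
    calc |Fenv z - Fenv xb| ≤ C * ‖z - xb‖^2 := hb
      _ ≤ ε * ‖z - xb‖ := by
          have hz' : ‖z - xb‖ * (C+1) ≤ ε :=
            (le_div_iff₀ (by positivity : (0:ℝ) < C+1)).1 hzd
          nlinarith [mul_le_mul_of_nonneg_right hz' hd0, hd0, hC0]
  have hfder : HasFDerivWithinAt Fenv (0 : X →L[ℝ] ℝ) (closure domg) xb :=
    HasFDerivWithinAt.of_isLittleO hlittle
  have hgr := hfder.hasGradientWithinAt
  rwa [map_zero] at hgr
end
end

section
/- Let γ > 0 and let 𝒟 be a self-adjoint positive definite linear operator on 𝕏. If x̄ ∈ cl(dom g) and F_{γ,𝒟}(x̄) = F(x̄), then prox^𝒟_{γg}(x̄ − γ𝒟^{−1}∇f(x̄)) = x̄; in particular x̄ ∈ dom g and 0 ∈ ∇f(x̄) + ∂g(x̄), i.e. x̄ is a stationary point of F. -/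
open Set Filter
open scoped RealInnerProductSpace ENNReal

noncomputable section

attribute [local instance] Classical.propDecidable

variable {X : Type*} [NormedAddCommGroup X] [InnerProductSpace ℝ X] [FiniteDimensional ℝ X]

/-- `p` is the proximal point `prox^D_{γ g}(u)`, i.e. the minimizer over `dom g` of
`z ↦ (1/(2γ)) ⟪ z - u, D (z - u) ⟫ + g z`. -/
def IsProxPt (γ : ℝ) (D : X →L[ℝ] X) (g : X → ℝ) (s : Set X) (u p : X) : Prop :=
  p ∈ s ∧ ∀ z ∈ s,
    (1 / (2 * γ)) * ⟪p - u, D (p - u)⟫ + g p ≤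
      (1 / (2 * γ)) * ⟪z - u, D (z - u)⟫ + g z

/-- `x` is a stationary point of `F = f + g`, i.e. `0 ∈ ∇f(x) + ∂g(x)`. -/
def IsFBStationary (fgrad : X → X) (g : X → ℝ) (s : Set X) (x : X) : Prop :=
  -fgrad x ∈ SubdiffAt g s x

private lemma symD {X : Type*} [NormedAddCommGroup X] [InnerProductSpace ℝ X]
    (D : X →L[ℝ] X) (hDsa : ∀ u v : X, ⟪D u, v⟫ = ⟪u, D v⟫) (a b : X) :
    ⟪a, D b⟫ = ⟪b, D a⟫ := by rw [← hDsa]; exact real_inner_comm _ _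

private lemma expand_subD {X : Type*} [NormedAddCommGroup X] [InnerProductSpace ℝ X]
    (D : X →L[ℝ] X) (hDsa : ∀ u v : X, ⟪D u, v⟫ = ⟪u, D v⟫) (a b : X) :
    ⟪a - b, D (a - b)⟫ = ⟪a, D a⟫ - 2 * ⟪a, D b⟫ + ⟪b, D b⟫ := by
  have h := symD D hDsa a b
  simp only [map_sub, inner_sub_left, inner_sub_right]
  linarith

private lemma expand_add_smulD {X : Type*} [NormedAddCommGroup X] [InnerProductSpace ℝ X]
    (D : X →L[ℝ] X) (hDsa : ∀ u v : X, ⟪D u, v⟫ = ⟪u, D v⟫) (a b : X) (t : ℝ) :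
    ⟪a + t • b, D (a + t • b)⟫ = ⟪a, D a⟫ + 2 * t * ⟪b, D a⟫ + t ^ 2 * ⟪b, D b⟫ := by
  have h := symD D hDsa a b
  simp only [map_add, map_smul, inner_add_left, inner_add_right, real_inner_smul_left,
    real_inner_smul_right]
  rw [h]; ring

/-- if `F_{γ,D}(x̄) = F(x̄)` and `x̄ ∈ cl (dom g)`, then `x̄` is a fixed point
of the prox-gradient mapping, hence a stationary point of `F`. -/
theorem fbe_eq_implies_stationary
    (f g : X → ℝ) (domg O : Set X) (fgrad : X → X)
    (hdom : domg.Nonempty) (hO : IsOpen O) (hclO : closure domg ⊆ O)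
    (hgconv : ConvexOn ℝ domg g) (hgcont : ContinuousOn g domg)
    (hglsc : LowerSemicontinuous (extE g domg))
    (hflsc : LowerSemicontinuous f)
    (hfC2 : ContDiffOn ℝ 2 f O)
    (hfgrad : ∀ z ∈ O, HasGradientAt f (fgrad z) z)
    (hFlb : ∃ c : ℝ, ∀ z ∈ domg, c ≤ f z + g z)
    (γ : ℝ) (hγ : 0 < γ) (D : X →L[ℝ] X)
    (hDsa : ∀ u v : X, ⟪D u, v⟫ = ⟪u, D v⟫)
    (hDpd : ∀ u : X, u ≠ 0 → 0 < ⟪u, D u⟫)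
    (Dinv : X →L[ℝ] X) (hDinv : ∀ u : X, Dinv (D u) = u ∧ D (Dinv u) = u)
    (proxD : X → X) (hproxD : ∀ u : X, IsProxPt γ D g domg u (proxD u))
    (xb : X) (hxb : xb ∈ closure domg)
    (heq : FBenvE γ D f fgrad g domg xb = FE f g domg xb) :
    proxD (xb - γ • Dinv (fgrad xb)) = xb ∧ xb ∈ domg ∧ IsFBStationary fgrad g domg xb := by

  set u : X := xb - γ • Dinv (fgrad xb) with hu
  -- x̄ is in the domain of g
  have hGEeq : ∀ z ∈ domg, GE γ D f fgrad g domg xb z = ((f z + g z +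
      (phiGD γ D f z - phiGD γ D f xb - ⟪phiGDgrad γ D fgrad xb, z - xb⟫) : ℝ) : EReal) := by
    intro z hz
    simp only [GE, FE, extE, BregE, if_pos hz, if_pos hxb]
    norm_cast
  have hxdom : xb ∈ domg := by
    by_contra hnot
    obtain ⟨y0, hy0⟩ := hdom
    have h1 : FBenvE γ D f fgrad g domg xb ≤ GE γ D f fgrad g domg xb y0 := iInf_le _ y0
    have h3 : FE f g domg xb = ⊤ := by simp [FE, extE, hnot]
    rw [heq, h3, hGEeq y0 hy0] at h1
    exact (EReal.coe_lt_top _).not_ge h1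
  have hFExb : FE f g domg xb = ((f xb + g xb : ℝ) : EReal) := by
    simp only [FE, extE, if_pos hxdom]; norm_cast
  have hkey : ∀ z ∈ domg, f xb + g xb ≤ f z + g z +
      (phiGD γ D f z - phiGD γ D f xb - ⟪phiGDgrad γ D fgrad xb, z - xb⟫) := by
    intro z hz
    have h1 : FBenvE γ D f fgrad g domg xb ≤ GE γ D f fgrad g domg xb z := iInf_le _ z
    rw [heq, hFExb, hGEeq z hz] at h1
    exact_mod_cast h1
  have hγ' : γ ≠ 0 := ne_of_gt hγ
  have hxu : xb - u = γ • Dinv (fgrad xb) := by rw [hu]; abel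
  have hDxu : D (xb - u) = γ • fgrad xb := by rw [hxu, map_smul, (hDinv _).2]
  have hDu : D u = D xb - γ • fgrad xb := by
    rw [hu, map_sub, map_smul, (hDinv _).2]
  have hwDu : ∀ w : X, ⟪w, D u⟫ = ⟪w, D xb⟫ - γ * ⟪w, fgrad xb⟫ := by
    intro w; rw [hDu, inner_sub_right, real_inner_smul_right]
  -- x̄ minimizes the prox objective at u
  have hmin : ∀ z ∈ domg,
      (1 / (2 * γ)) * ⟪xb - u, D (xb - u)⟫ + g xb ≤
        (1 / (2 * γ)) * ⟪z - u, D (z - u)⟫ + g z := by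
    intro z hz
    have hid : (1 / (2 * γ)) * ⟪z - u, D (z - u)⟫ + g z -
        ((1 / (2 * γ)) * ⟪xb - u, D (xb - u)⟫ + g xb) =
        f z + g z + (phiGD γ D f z - phiGD γ D f xb -
          ⟪phiGDgrad γ D fgrad xb, z - xb⟫) - (f xb + g xb) := by
      rw [expand_subD D hDsa z u, expand_subD D hDsa xb u, hwDu z, hwDu xb]
      simp only [phiGD, phiGDgrad, inner_sub_left, inner_sub_right, real_inner_smul_left]
      rw [real_inner_comm (D xb) z, real_inner_comm (D xb) xb,
        real_inner_comm (fgrad xb) z, real_inner_comm (fgrad xb) xb]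
      field_simp
      ring
    linarith [hkey z hz, hid]
  -- the prox point equals x̄
  obtain ⟨hpdom, hpmin⟩ := hproxD u
  set p : X := proxD u with hp
  have hle1 : (1 / (2 * γ)) * ⟪p - u, D (p - u)⟫ + g p ≤
      (1 / (2 * γ)) * ⟪xb - u, D (xb - u)⟫ + g xb := hpmin xb hxdom
  have hle2 : (1 / (2 * γ)) * ⟪xb - u, D (xb - u)⟫ + g xb ≤
      (1 / (2 * γ)) * ⟪p - u, D (p - u)⟫ + g p := hmin p hpdom
  have hc : (0 : ℝ) < 1 / (2 * γ) := by positivity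
  have hpeq : p = xb := by
    by_contra hne
    set m : X := (1/2 : ℝ) • p + (1/2 : ℝ) • xb with hm
    have hmdom : m ∈ domg := hgconv.1 hpdom hxdom (by norm_num) (by norm_num) (by norm_num)
    have hgm : g m ≤ (1/2 : ℝ) * g p + (1/2 : ℝ) * g xb :=
      hgconv.2 hpdom hxdom (by norm_num) (by norm_num) (by norm_num)
    have hmu : m - u = (p - u) + (1/2 : ℝ) • ((xb - u) - (p - u)) := by
      rw [hm]; module
    have hQm : ⟪m - u, D (m - u)⟫ = ⟪p - u, D (p - u)⟫ +
        2 * (1/2 : ℝ) * ⟪(xb - u) - (p - u), D (p - u)⟫ +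
        (1/2 : ℝ) ^ 2 * ⟪(xb - u) - (p - u), D ((xb - u) - (p - u))⟫ := by
      rw [hmu, expand_add_smulD D hDsa]
    have hsub : (xb - u) - (p - u) = xb - p := by abel
    have hQsub : ⟪(xb - u) - (p - u), D ((xb - u) - (p - u))⟫ =
        ⟪xb - u, D (xb - u)⟫ - 2 * ⟪xb - u, D (p - u)⟫ + ⟪p - u, D (p - u)⟫ :=
      expand_subD D hDsa _ _
    have hcross : ⟪(xb - u) - (p - u), D (p - u)⟫ =
        ⟪xb - u, D (p - u)⟫ - ⟪p - u, D (p - u)⟫ := by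
      rw [inner_sub_left]
    have hpos : 0 < ⟪xb - p, D (xb - p)⟫ := hDpd _ (sub_ne_zero.2 (Ne.symm hne))
    rw [hsub] at hQsub hQm hcross
    have hminm := hmin m hmdom
    have e1 : (1 / (2 * γ)) * ⟪m - u, D (m - u)⟫ =
        (1 / (2 * γ)) * ⟪xb - u, D (p - u)⟫ +
        (1/4) * ((1 / (2 * γ)) * ⟪xb - p, D (xb - p)⟫) := by
      rw [hQm, hcross]; ring
    have e2 : (1 / (2 * γ)) * ⟪xb - p, D (xb - p)⟫ =
        (1 / (2 * γ)) * ⟪xb - u, D (xb - u)⟫ - 2 * ((1 / (2 * γ)) * ⟪xb - u, D (p - u)⟫) +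
        (1 / (2 * γ)) * ⟪p - u, D (p - u)⟫ := by
      rw [hQsub]; ring
    have ha4 : 0 < (1 / (2 * γ)) * ⟪xb - p, D (xb - p)⟫ := mul_pos hc hpos
    linarith [e1, e2, ha4, hminm, hgm, hle1]
  -- stationarity
  have hstep : ∀ z ∈ domg, ∀ t : ℝ, 0 < t → t ≤ 1 →
      0 ≤ ⟪z - xb, fgrad xb⟫ + t * ((1 / (2 * γ)) * ⟪z - xb, D (z - xb)⟫) + (g z - g xb) := by
    intro z hz t ht0 ht1
    have hcomb : (1 - t) • xb + t • z = xb + t • (z - xb) := by module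
    have hztdom : xb + t • (z - xb) ∈ domg := by
      rw [← hcomb]
      exact hgconv.1 hxdom hz (by linarith) ht0.le (by ring)
    have hgzt : g (xb + t • (z - xb)) ≤ (1 - t) * g xb + t * g z := by
      have := hgconv.2 hxdom hz (by linarith : (0:ℝ) ≤ 1 - t) ht0.le (by ring)
      rw [hcomb] at this
      simpa using this
    have h1 := hmin _ hztdom
    have h3 : xb + t • (z - xb) - u = (xb - u) + t • (z - xb) := by abel
    rw [h3, expand_add_smulD D hDsa _ _ t] at h1
    have h4 : ⟪z - xb, D (xb - u)⟫ = γ * ⟪z - xb, fgrad xb⟫ := by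
      rw [hDxu, real_inner_smul_right]
    rw [h4] at h1
    have hE : 0 ≤ t * (⟪z - xb, fgrad xb⟫ +
        t * ((1 / (2 * γ)) * ⟪z - xb, D (z - xb)⟫) + (g z - g xb)) := by
      have e : (1 / (2 * γ)) * (⟪xb - u, D (xb - u)⟫ + 2 * t * (γ * ⟪z - xb, fgrad xb⟫) +
          t ^ 2 * ⟪z - xb, D (z - xb)⟫) =
          (1 / (2 * γ)) * ⟪xb - u, D (xb - u)⟫ + t * ⟪z - xb, fgrad xb⟫ +
          t * (t * ((1 / (2 * γ)) * ⟪z - xb, D (z - xb)⟫)) := by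
        field_simp
      rw [e] at h1
      nlinarith [h1, hgzt]
    exact nonneg_of_mul_nonneg_right hE ht0
  have hsubdiff : ∀ z ∈ domg, g xb + ⟪-fgrad xb, z - xb⟫ ≤ g z := by
    intro z hz
    have hinn : ⟪-fgrad xb, z - xb⟫ = -⟪z - xb, fgrad xb⟫ := by
      rw [inner_neg_left, real_inner_comm]
    rw [hinn]
    rcases eq_or_ne (z - xb) 0 with hb | hb
    · have hzx : z = xb := by
        have := sub_eq_zero.1 hb; exact this
      rw [hzx]; simp
    · set K : ℝ := (1 / (2 * γ)) * ⟪z - xb, D (z - xb)⟫ with hK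
      have hKpos : 0 < K := mul_pos hc (hDpd _ hb)
      by_contra hcon
      push_neg at hcon
      set A : ℝ := ⟪z - xb, fgrad xb⟫ + (g z - g xb) with hA
      have hAneg : A < 0 := by rw [hA]; linarith
      set t : ℝ := min 1 ((-A) / (2 * K)) with ht
      have ht0 : 0 < t := lt_min one_pos (div_pos (neg_pos.2 hAneg) (by linarith))
      have ht1 : t ≤ 1 := min_le_left _ _
      have h5 : 0 ≤ ⟪z - xb, fgrad xb⟫ + t * K + (g z - g xb) := by
        rw [hK]; exact hstep z hz t ht0 ht1
      have h6 : t * K ≤ (-A) / (2 * K) * K :=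
        mul_le_mul_of_nonneg_right (min_le_right _ _) hKpos.le
      have h7 : (-A) / (2 * K) * K = -A / 2 := by field_simp
      rw [h7] at h6
      have : 0 ≤ A + t * K := by rw [hA]; linarith
      linarith
  refine ⟨hpeq, hxdom, hxdom, hsubdiff⟩
end
end

section
/- Suppose g is prox-bounded with threshold λ_g ∈ (0, ∞]. Then for every η̲ > 0, every self-adjoint linear operator 𝒟 on 𝕏 with 𝒟 ⪰ η̲I, and every γ ∈ (0, η̲λ_g), the function G_{γ,𝒟} is level-bounded in y locally uniformly in x: for every x̂ ∈ 𝕏 and every μ ∈ ℝ there exist a neighborhood V of x̂ and a bounded set B ⊆ 𝕏 such that {y ∈ 𝕏 : G_{γ,𝒟}(x,y) ≤ μ} ⊆ B for every x ∈ V. -/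
open Set Filter
open scoped RealInnerProductSpace ENNReal

noncomputable section

attribute [local instance] Classical.propDecidable

variable {X : Type*} [NormedAddCommGroup X] [InnerProductSpace ℝ X] [FiniteDimensional ℝ X]

lemma breg_expand (γ : ℝ) (D : X →L[ℝ] X) (f : X → ℝ) (fgrad : X → X)
    (hDsa : ∀ u v : X, ⟪D u, v⟫ = ⟪u, D v⟫) (y x : X) :
    phiGD γ D f y - phiGD γ D f x - ⟪phiGDgrad γ D fgrad x, y - x⟫ =
    (1/(2*γ)) * ⟪y - x, D (y - x)⟫ - f y + f x + ⟪fgrad x, y - x⟫ := by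
  have hxy : ⟪y, D x⟫ = ⟪x, D y⟫ := by rw [real_inner_comm]; exact hDsa x y
  simp only [phiGD, phiGDgrad, inner_sub_left, inner_sub_right, map_sub, real_inner_smul_left]
  linear_combination (1/(2*γ)) * hxy - (1/γ) * hDsa x y + (1/γ) * hDsa x x

lemma quad_bound (e A Bc ny r : ℝ) (he : 0 < e) (hny : 0 ≤ ny)
    (hkey : e * ny ^ 2 ≤ A + Bc * ny) (hr : r = max 1 ((|A| + |Bc|) / e)) :
    ny ≤ r := by
  by_cases hy1 : ny ≤ 1
  · exact hy1.trans (hr ▸ le_max_left _ _)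
  · push_neg at hy1
    have h1 : e * ny * ny ≤ (|A| + |Bc|) * ny := by
      have hA : A ≤ |A| := le_abs_self A
      have hB : Bc * ny ≤ |Bc| * ny :=
        mul_le_mul_of_nonneg_right (le_abs_self Bc) hny
      have hA2 : |A| ≤ |A| * ny := by nlinarith [abs_nonneg A]
      nlinarith [hkey]
    have h2 : e * ny ≤ |A| + |Bc| := by
      have hypos : 0 < ny := lt_trans one_pos hy1
      have := (mul_le_mul_iff_of_pos_right hypos).mp h1
      linarith
    have : ny ≤ (|A| + |Bc|) / e := by
      rw [le_div_iff₀ he]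
      linarith
    exact this.trans (hr ▸ le_max_right _ _)

/-- under prox-boundedness of `g`, `G_{γ,D}` is level-bounded in `y`
locally uniformly in `x`. -/
theorem Ggam_level_bounded
    (f g : X → ℝ) (domg O : Set X) (fgrad : X → X)
    (hdom : domg.Nonempty) (hO : IsOpen O) (hclO : closure domg ⊆ O)
    (hgconv : ConvexOn ℝ domg g) (hgcont : ContinuousOn g domg)
    (hglsc : LowerSemicontinuous (extE g domg))
    (hflsc : LowerSemicontinuous f)
    (hfC2 : ContDiffOn ℝ 2 f O)
    (hfgrad : ∀ z ∈ O, HasGradientAt f (fgrad z) z)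
    (hFlb : ∃ c : ℝ, ∀ z ∈ domg, c ≤ f z + g z)
    (lamg : ℝ≥0∞) (hlamg : 0 < lamg)
    (hpb : ∀ lam : ℝ, 0 < lam → ENNReal.ofReal lam < lamg →
      ∃ c : ℝ, ∀ z ∈ domg, c ≤ g z + (1 / (2 * lam)) * ‖z‖ ^ 2)
    (η : ℝ) (hη : 0 < η)
    (D : X →L[ℝ] X)
    (hDsa : ∀ u v : X, ⟪D u, v⟫ = ⟪u, D v⟫)
    (hDlb : ∀ u : X, η * ‖u‖ ^ 2 ≤ ⟪u, D u⟫)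
    (γ : ℝ) (hγ : 0 < γ) (hγlt : ENNReal.ofReal (γ / η) < lamg) :
    ∀ (xhat : X) (μ : ℝ), ∃ V ∈ nhds xhat, ∃ Bset : Set X, Bornology.IsBounded Bset ∧
      ∀ x ∈ V, {yy : X | GE γ D f fgrad g domg x yy ≤ (μ : EReal)} ⊆ Bset := by
  intro xhat μ
  -- choose lam with γ/η < lam and ofReal lam < lamg
  obtain ⟨lam, hlam0, hlt1, hlt2⟩ := ENNReal.lt_iff_exists_real_btwn.mp hγlt
  have hγη : 0 < γ / η := div_pos hγ hη
  have hlampos : 0 < lam := by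
    rcases lt_or_ge 0 lam with h | h
    · exact h
    · exfalso; rw [ENNReal.ofReal_eq_zero.mpr h] at hlt1; simp at hlt1
  have hlamgt : γ / η < lam := (ENNReal.ofReal_lt_ofReal_iff hlampos).mp hlt1
  obtain ⟨c, hc⟩ := hpb lam hlampos hlt2
  -- bounds for f and fgrad on the compact set K
  set K : Set X := Metric.closedBall xhat 1 ∩ closure domg with hKdef
  have hKO : K ⊆ O := (inter_subset_right).trans hclO
  have hK : IsCompact K :=
    (isCompact_closedBall xhat 1).inter_right isClosed_closure
  have hfc : ContinuousOn f K := (hfC2.continuousOn).mono hKO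
  have hfd : ContinuousOn (fderiv ℝ f) O :=
    hfC2.continuousOn_fderiv_of_isOpen hO (by norm_num)
  have hgradO : ContinuousOn fgrad O := by
    have hcont : ContinuousOn
        (fun z => (InnerProductSpace.toDual ℝ X).symm (fderiv ℝ f z)) O :=
      (InnerProductSpace.toDual ℝ X).symm.continuous.comp_continuousOn hfd
    refine hcont.congr fun z hz => ?_
    have h1 : HasFDerivAt f ((InnerProductSpace.toDual ℝ X) (fgrad z)) z :=
      hasGradientAt_iff_hasFDerivAt.mp (hfgrad z hz)
    show fgrad z = (InnerProductSpace.toDual ℝ X).symm (fderiv ℝ f z)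
    rw [h1.fderiv, LinearIsometryEquiv.symm_apply_apply]
  obtain ⟨M1, hM1⟩ := hK.exists_bound_of_continuousOn hfc
  obtain ⟨M2, hM2⟩ := hK.exists_bound_of_continuousOn (hgradO.mono hKO)
  obtain ⟨M, hM0, hMf, hMg⟩ :
      ∃ M : ℝ, 0 ≤ M ∧ (∀ x ∈ K, |f x| ≤ M) ∧ (∀ x ∈ K, ‖fgrad x‖ ≤ M) :=
    ⟨max (max M1 M2) 0, le_max_right _ _,
      fun x hx => (hM1 x hx).trans ((le_max_left M1 M2).trans (le_max_left _ _)),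
      fun x hx => (hM2 x hx).trans ((le_max_right M1 M2).trans (le_max_left _ _))⟩
  obtain ⟨R, hRdef, hR0⟩ : ∃ R : ℝ, R = ‖xhat‖ + 1 ∧ 0 ≤ R :=
    ⟨‖xhat‖ + 1, rfl, by positivity⟩
  obtain ⟨ε, hεdef, hε⟩ : ∃ ε : ℝ, ε = η / (2 * γ) - 1 / (2 * lam) ∧ 0 < ε := by
    refine ⟨_, rfl, ?_⟩
    have h1 : γ < lam * η := (div_lt_iff₀ hη).mp hlamgt
    rw [sub_pos, div_lt_div_iff₀ (by positivity) (by positivity)]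
    nlinarith
  obtain ⟨A, hAdef⟩ : ∃ A : ℝ, A = μ - c + M + M * R := ⟨_, rfl⟩
  obtain ⟨Bc, hBcdef⟩ : ∃ Bc : ℝ, Bc = η * R / γ + M := ⟨_, rfl⟩
  obtain ⟨r, hrdef⟩ : ∃ r : ℝ, r = max 1 ((|A| + |Bc|) / ε) := ⟨_, rfl⟩
  refine ⟨Metric.closedBall xhat 1, Metric.closedBall_mem_nhds xhat one_pos,
    Metric.closedBall 0 r, Metric.isBounded_closedBall, ?_⟩
  intro x hx y hy
  simp only [mem_setOf_eq] at hy
  -- x must be in closure domg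
  by_cases hxc : x ∈ closure domg
  swap
  · exfalso
    rw [GE, BregE, if_neg hxc] at hy
    have : FE f g domg y + ⊤ = ⊤ := by
      rw [FE, extE]
      by_cases hyd : y ∈ domg
      · rw [if_pos hyd, ← EReal.coe_add, EReal.coe_add_top]
      · rw [if_neg hyd, EReal.coe_add_top, EReal.top_add_top]
    rw [this] at hy
    exact (not_le.mpr (EReal.coe_lt_top μ)) hy
  -- y must be in domg
  by_cases hyd : y ∈ domg
  swap
  · exfalso
    rw [GE, BregE, if_pos hxc, FE, extE, if_neg hyd, EReal.coe_add_top,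
      EReal.top_add_coe] at hy
    exact (not_le.mpr (EReal.coe_lt_top μ)) hy
  -- real inequality
  rw [GE, BregE, if_pos hxc, FE, extE, if_pos hyd, ← EReal.coe_add, ← EReal.coe_add,
    EReal.coe_le_coe_iff, breg_expand γ D f fgrad hDsa y x] at hy
  have hreal : g y + (1/(2*γ)) * ⟪y - x, D (y - x)⟫ + f x + ⟪fgrad x, y - x⟫ ≤ μ := by
    linarith
  have hxK : x ∈ K := ⟨hx, hxc⟩
  have hfxb : |f x| ≤ M := hMf x hxK
  have hgxb : ‖fgrad x‖ ≤ M := hMg x hxK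
  have hxn : ‖x‖ ≤ R := by
    have h1 := mem_closedBall_iff_norm.mp hx
    have h2 := norm_sub_norm_le x xhat
    rw [hRdef]; linarith
  have hgy : c - (1/(2*lam)) * ‖y‖^2 ≤ g y := by
    have := hc y hyd
    linarith
  have hQ : η * ‖y - x‖^2 ≤ ⟪y - x, D (y - x)⟫ := hDlb _
  have hinner : -(M * ‖y - x‖) ≤ ⟪fgrad x, y - x⟫ := by
    have h1 := abs_real_inner_le_norm (fgrad x) (y - x)
    have h2 : ‖fgrad x‖ * ‖y - x‖ ≤ M * ‖y - x‖ :=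
      mul_le_mul_of_nonneg_right hgxb (norm_nonneg _)
    have := neg_abs_le (⟪fgrad x, y - x⟫)
    linarith
  have htb : ‖y - x‖ ≤ ‖y‖ + R := by
    calc ‖y - x‖ ≤ ‖y‖ + ‖x‖ := norm_sub_le _ _
    _ ≤ ‖y‖ + R := by linarith
  have hsq : ‖y‖^2 - 2 * R * ‖y‖ ≤ ‖y - x‖^2 := by
    have h1 := norm_sub_sq_real y x
    have h2 : ⟪y, x⟫ ≤ ‖y‖ * ‖x‖ := real_inner_le_norm y x
    have h3 : ‖y‖ * ‖x‖ ≤ ‖y‖ * R := mul_le_mul_of_nonneg_left hxn (norm_nonneg _)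
    nlinarith [sq_nonneg ‖x‖]
  -- derive ε ‖y‖² ≤ A + Bc ‖y‖
  have hkey : ε * ‖y‖^2 ≤ A + Bc * ‖y‖ := by
    have hfxlb : -M ≤ f x := by
      have := neg_abs_le (f x)
      linarith
    have h2γ : 0 < 1/(2*γ) := by positivity
    have hq1 : (1/(2*γ)) * (η * ‖y‖^2 - 2 * η * R * ‖y‖) ≤ (1/(2*γ)) * ⟪y - x, D (y - x)⟫ := by
      apply mul_le_mul_of_nonneg_left _ (le_of_lt h2γ)
      calc η * ‖y‖^2 - 2 * η * R * ‖y‖ = η * (‖y‖^2 - 2 * R * ‖y‖) := by ring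
      _ ≤ η * ‖y - x‖^2 := mul_le_mul_of_nonneg_left hsq (le_of_lt hη)
      _ ≤ ⟪y - x, D (y - x)⟫ := hQ
    have hi1 : -(M * (‖y‖ + R)) ≤ ⟪fgrad x, y - x⟫ := by
      have : M * ‖y - x‖ ≤ M * (‖y‖ + R) := mul_le_mul_of_nonneg_left htb hM0
      linarith
    have hgγ : (1/(2*γ)) * (η * ‖y‖^2 - 2 * η * R * ‖y‖)
        = (η/(2*γ)) * ‖y‖^2 - (η * R / γ) * ‖y‖ := by
      field_simp
    rw [hgγ] at hq1
    rw [hεdef, hAdef, hBcdef]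
    linarith only [hreal, hgy, hq1, hi1, hfxlb]
  -- conclude ‖y‖ ≤ r
  rw [mem_closedBall_zero_iff]
  exact quad_bound ε A Bc ‖y‖ r hε (norm_nonneg y) hkey hrdef
end
end

section
/- Let x̄ ∈ cl(dom g), let ε > 0 be such that the closed ball B(x̄, ε) is contained in 𝒪, and let L > 0 be a Lipschitz constant of ∇f on B(x̄, ε). Suppose g is prox-bounded with threshold λ_g ∈ (0, ∞] and that F has the KL property with exponent θ ∈ [1/2, 1) at x̄, i.e. there exist c > 0, δ > 0, ϖ > 0 such that dist(0, ∇f(x) + ∂g(x)) ≥ c(F(x) − F(x̄))^θ for all x ∈ B(x̄, δ) ∩ dom g with F(x̄) < F(x) < F(x̄) + ϖ. Then for every γ ∈ (0, min{λ_g, 1/L}), the envelope F_γ = F_{γ,I} has the KL property with exponent θ at x̄: there exist c' > 0, δ' > 0, ϖ' > 0 such that ‖∇F_γ(x)‖ ≥ c'(F_γ(x) − F_γ(x̄))^θ for all x ∈ B(x̄, δ') ∩ cl(dom g) with F_γ(x̄) < F_γ(x) < F_γ(x̄) + ϖ'. -/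
open Set Filter
open scoped RealInnerProductSpace ENNReal

noncomputable section

attribute [local instance] Classical.propDecidable

variable {X : Type*} [NormedAddCommGroup X] [InnerProductSpace ℝ X] [FiniteDimensional ℝ X]

section AuxLemmas

lemma real_le_of_forall_pos_le_add {a b : ℝ} (h : ∀ ε : ℝ, 0 < ε → a ≤ b + ε) : a ≤ b := by
  by_contra hc
  push_neg at hc
  have := h ((a - b)/2) (by linarith)
  linarith

lemma prox_subdiff {γ : ℝ} (hγ : 0 < γ) {g : X → ℝ} {domg : Set X}
    (hgconv : ConvexOn ℝ domg g) {u p : X}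
    (hp : IsProxPt γ (ContinuousLinearMap.id ℝ X) g domg u p) :
    (1/γ) • (u - p) ∈ SubdiffAt g domg p := by
  refine ⟨hp.1, fun y hy => ?_⟩
  have hC : (0:ℝ) ≤ (1/(2*γ)) * ‖y - p‖^2 := by positivity
  apply real_le_of_forall_pos_le_add
  intro ε hε
  set C : ℝ := (1/(2*γ)) * ‖y - p‖^2 with hCdef
  set t : ℝ := min 1 (ε/(C+1)) with htdef
  have ht0 : 0 < t := lt_min one_pos (by positivity)
  have ht1 : t ≤ 1 := min_le_left _ _
  have htC : t * C ≤ ε := by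
    have h1 : t ≤ ε/(C+1) := min_le_right _ _
    have : t * C ≤ (ε/(C+1)) * C := by nlinarith
    have h2 : (ε/(C+1)) * C ≤ ε := by
      rw [div_mul_eq_mul_div, div_le_iff₀ (by linarith)]
      nlinarith
    linarith
  have hyt : (1-t) • p + t • y ∈ domg := hgconv.1 hp.1 hy (by linarith) ht0.le (by ring)
  have hkey := hp.2 _ hyt
  have hgc := hgconv.2 hp.1 hy (by linarith : (0:ℝ) ≤ 1 - t) ht0.le (by ring)
  simp only [ContinuousLinearMap.id_apply] at hkey
  have hexp : ((1-t) • p + t • y) - u = (p - u) + t • (y - p) := by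
    rw [sub_smul, one_smul, smul_sub]; abel
  rw [hexp] at hkey
  have hinner : ⟪(p - u) + t • (y - p), (p - u) + t • (y - p)⟫ =
      ⟪p - u, p - u⟫ + 2 * t * ⟪p - u, y - p⟫ + t^2 * ⟪y - p, y - p⟫ := by
    simp only [inner_add_left, inner_add_right, real_inner_smul_left, real_inner_smul_right,
      real_inner_comm (p-u) (y-p)]
    ring
  rw [hinner] at hkey
  have hn : ⟪y - p, y - p⟫ = ‖y - p‖^2 := real_inner_self_eq_norm_sq _
  rw [hn] at hkey
  have hmain : t * g p ≤ t * g y + (1/(2*γ)) * (2 * t * ⟪p - u, y - p⟫ + t^2 * ‖y - p‖^2) := by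
    simp only [smul_eq_mul] at hgc
    have hs : (0:ℝ) < 1/(2*γ) := by positivity
    nlinarith [hkey, hgc, mul_le_mul_of_nonneg_left hgc hs.le]
  have hdiv : g p ≤ g y + (1/γ) * ⟪p - u, y - p⟫ + t * C := by
    have h2γ : (1/(2*γ)) * (2 * t * ⟪p - u, y - p⟫ + t^2 * ‖y - p‖^2)
        = t * ((1/γ) * ⟪p - u, y - p⟫ + t * C) := by
      rw [hCdef]
      ring
    rw [h2γ] at hmain
    have := (mul_le_mul_iff_right₀ ht0).1 (by linarith [hmain] :
      t * g p ≤ t * (g y + ((1/γ) * ⟪p - u, y - p⟫ + t * C)))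
    linarith
  have hv : ⟪(1/γ) • (u - p), y - p⟫ = -((1/γ) * ⟪p - u, y - p⟫) := by
    rw [real_inner_smul_left]
    have : (u - p) = -(p - u) := by abel
    rw [this, inner_neg_left]; ring
  rw [hv]; linarith

lemma prox_nonexpansive {γ : ℝ} (hγ : 0 < γ) {g : X → ℝ} {domg : Set X}
    (hgconv : ConvexOn ℝ domg g) {u u' p p' : X}
    (hp : IsProxPt γ (ContinuousLinearMap.id ℝ X) g domg u p)
    (hp' : IsProxPt γ (ContinuousLinearMap.id ℝ X) g domg u' p') :
    ‖p - p'‖ ≤ ‖u - u'‖ := by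
  have h1 := (prox_subdiff hγ hgconv hp).2 p' hp'.1
  have h2 := (prox_subdiff hγ hgconv hp').2 p hp.1
  have hadd : ⟪(1/γ) • (u - p), p' - p⟫ + ⟪(1/γ) • (u' - p'), p - p'⟫ ≤ 0 := by linarith
  rw [real_inner_smul_left, real_inner_smul_left] at hadd
  have hsum : ⟪u - p, p' - p⟫ + ⟪u' - p', p - p'⟫ ≤ 0 := by
    have hγ' : 0 < 1/γ := by positivity
    nlinarith
  have hkey : ‖p - p'‖^2 ≤ ⟪u - u', p - p'⟫ := by
    have e1 : ⟪u' - p', p - p'⟫ = -⟪u' - p', p' - p⟫ := by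
      rw [← inner_neg_right]; congr 1; abel
    rw [e1] at hsum
    have e2 : ⟪u - p, p' - p⟫ - ⟪u' - p', p' - p⟫ = ⟪(u - u') - (p - p'), p' - p⟫ := by
      simp only [inner_sub_left]
      ring
    have h3 : ⟪(u - u') - (p - p'), p' - p⟫ ≤ 0 := by rw [← e2]; linarith
    rw [inner_sub_left] at h3
    have e3 : ⟪p - p', p' - p⟫ = -‖p - p'‖^2 := by
      rw [show p' - p = -(p - p') by abel, inner_neg_right, real_inner_self_eq_norm_sq]
    have e4 : ⟪u - u', p' - p⟫ = -⟪u - u', p - p'⟫ := by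
      rw [show p' - p = -(p - p') by abel, inner_neg_right]
    rw [e3, e4] at h3
    linarith
  have hcs := real_inner_le_norm (u - u') (p - p')
  rcases eq_or_lt_of_le (norm_nonneg (p - p')) with h0 | h0
  · rw [← h0]; exact norm_nonneg _
  · nlinarith

lemma prox_fixed {γ : ℝ} (hγ : 0 < γ) {g : X → ℝ} {domg : Set X} {fgrad : X → X} {xb p : X}
    (hxbm : xb ∈ domg) (hsub : ∀ y ∈ domg, g xb + ⟪-fgrad xb, y - xb⟫ ≤ g y)
    (hp : IsProxPt γ (ContinuousLinearMap.id ℝ X) g domg (xb - γ • fgrad xb) p) :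
    p = xb := by
  have hkey := hp.2 xb hxbm
  simp only [ContinuousLinearMap.id_apply] at hkey
  have e1 : xb - (xb - γ • fgrad xb) = γ • fgrad xb := by abel
  have e2 : p - (xb - γ • fgrad xb) = (p - xb) + γ • fgrad xb := by abel
  rw [e1, e2] at hkey
  have hinner : ⟪(p - xb) + γ • fgrad xb, (p - xb) + γ • fgrad xb⟫ =
      ‖p - xb‖^2 + 2 * γ * ⟪p - xb, fgrad xb⟫ + γ^2 * ⟪fgrad xb, fgrad xb⟫ := by
    rw [real_inner_add_add_self, real_inner_self_eq_norm_sq, real_inner_smul_right,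
      real_inner_smul_left, real_inner_smul_right]
    ring
  have hinner2 : ⟪γ • fgrad xb, γ • fgrad xb⟫ = γ^2 * ⟪fgrad xb, fgrad xb⟫ := by
    simp only [real_inner_smul_left, real_inner_smul_right]; ring
  rw [hinner, hinner2] at hkey
  have hs := hsub p hp.1
  rw [inner_neg_left] at hs
  have hcomm : ⟪fgrad xb, p - xb⟫ = ⟪p - xb, fgrad xb⟫ := real_inner_comm _ _
  have hfrac : (1/(2*γ)) * (2 * γ * ⟪p - xb, fgrad xb⟫) = ⟪p - xb, fgrad xb⟫ := by
    field_simp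
  have hnorm : ‖p - xb‖^2 ≤ 0 := by
    have h2γ : 0 < 1/(2*γ) := by positivity
    nlinarith [hkey, hs]
  have h0 : ‖p - xb‖^2 = 0 := le_antisymm hnorm (sq_nonneg _)
  exact sub_eq_zero.1 (norm_eq_zero.1 ((pow_eq_zero_iff (by norm_num)).1 h0))

lemma taylor_bound (f : X → ℝ) (fgrad : X → X) (O : Set X)
    (hfgrad : ∀ z ∈ O, HasGradientAt f (fgrad z) z) {xb : X} {ε L : ℝ}
    (hball : Metric.closedBall xb ε ⊆ O)
    (hLip : LipschitzOnWith (Real.toNNReal L) fgrad (Metric.closedBall xb ε)) (hL : 0 ≤ L)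
    {a b : X} (ha : a ∈ Metric.closedBall xb ε) (hb : b ∈ Metric.closedBall xb ε) :
    |f b - f a - ⟪fgrad a, b - a⟫| ≤ L * ‖b - a‖^2 := by
  set s := segment ℝ a b with hs_def
  have hs : s ⊆ Metric.closedBall xb ε := (convex_closedBall xb ε).segment_subset ha hb
  set G : X → ℝ := fun y => f y - ⟪fgrad a, y⟫ with hG_def
  set G' : X → (X →L[ℝ] ℝ) := fun y =>
    (InnerProductSpace.toDual ℝ X) (fgrad y) - (InnerProductSpace.toDual ℝ X) (fgrad a) with hG'_def
  have hG : ∀ y ∈ s, HasFDerivWithinAt G (G' y) s y := by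
    intro y hy
    have h1 : HasFDerivAt f ((InnerProductSpace.toDual ℝ X) (fgrad y)) y :=
      (hfgrad y (hball (hs hy))).hasFDerivAt
    have h2 : HasFDerivAt (fun y => ⟪fgrad a, y⟫) ((InnerProductSpace.toDual ℝ X) (fgrad a)) y := by
      exact
        ((InnerProductSpace.toDual ℝ X) (fgrad a)).hasFDerivAt (x := y)
    exact ((h1.sub h2).hasFDerivWithinAt)
  have bound : ∀ y ∈ s, ‖G' y‖ ≤ L * ‖b - a‖ := by
    intro y hy
    have e1 : G' y = (InnerProductSpace.toDual ℝ X) (fgrad y - fgrad a) := by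
      rw [hG'_def]; simp [map_sub]
    have e2 : ‖G' y‖ = ‖fgrad y - fgrad a‖ := by
      rw [e1, LinearIsometryEquiv.norm_map]
    have hlip2 : ‖fgrad y - fgrad a‖ ≤ L * ‖y - a‖ := by
      have := hLip.dist_le_mul y (hs hy) a ha
      rwa [dist_eq_norm, dist_eq_norm, Real.coe_toNNReal _ hL] at this
    have hy2 : ‖y - a‖ ≤ ‖b - a‖ := by
      obtain ⟨u, v, hu, hv, huv, rfl⟩ := hy
      have huv' : u = 1 - v := by linarith
      subst huv'
      have : (1-v) • a + v • b - a = v • (b - a) := by module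
      rw [this, norm_smul, Real.norm_eq_abs, abs_of_nonneg hv]
      nlinarith [norm_nonneg (b - a)]
    rw [e2]
    calc ‖fgrad y - fgrad a‖ ≤ L * ‖y - a‖ := hlip2
      _ ≤ L * ‖b - a‖ := by nlinarith
  have hineq := (convex_segment a b).norm_image_sub_le_of_norm_hasFDerivWithin_le hG bound
    (left_mem_segment ℝ a b) (right_mem_segment ℝ a b)
  have e3 : G b - G a = f b - f a - ⟪fgrad a, b - a⟫ := by
    rw [hG_def]; simp [inner_sub_right]; ring
  rw [Real.norm_eq_abs, e3] at hineq
  calc |f b - f a - ⟪fgrad a, b - a⟫| ≤ L * ‖b - a‖ * ‖b - a‖ := hineq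
    _ = L * ‖b - a‖^2 := by ring

lemma FBenv_eq {γ : ℝ} (hγ : 0 < γ) (f g : X → ℝ) (domg : Set X) (fgrad : X → X)
    {x : X} (hx : x ∈ closure domg) {p : X}
    (hp : IsProxPt γ (ContinuousLinearMap.id ℝ X) g domg (x - γ • fgrad x) p) :
    FBenvE γ (ContinuousLinearMap.id ℝ X) f fgrad g domg x
      = ((f x + (g p + ⟪fgrad x, p - x⟫ + (1/(2*γ)) * ‖p - x‖^2) : ℝ) : EReal) := by
  set u : X := x - γ • fgrad x with hu_def
  set q : X → ℝ := fun y => g y + ⟪fgrad x, y - x⟫ + (1/(2*γ)) * ‖y - x‖^2 with hq_def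
  have hγ' : γ ≠ 0 := ne_of_gt hγ
  have hid : ∀ y : X, (1/(2*γ)) * ⟪y - u, y - u⟫ + g y = q y + (γ/2) * ‖fgrad x‖^2 := by
    intro y
    have e1 : y - u = (y - x) + γ • fgrad x := by rw [hu_def]; abel
    rw [e1, real_inner_add_add_self, real_inner_self_eq_norm_sq, real_inner_smul_right,
      real_inner_smul_left, real_inner_smul_right, real_inner_self_eq_norm_sq, hq_def]
    have : ⟪y - x, fgrad x⟫ = ⟪fgrad x, y - x⟫ := real_inner_comm _ _
    rw [this]
    field_simp
    ring
  have hmin : ∀ y ∈ domg, q p ≤ q y := by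
    intro y hy
    have h := hp.2 y hy
    simp only [ContinuousLinearMap.id_apply] at h
    have h1 := hid p
    have h2 := hid y
    rw [h1, h2] at h
    exact le_of_add_le_add_right h
  have hGE : ∀ y : X, GE γ (ContinuousLinearMap.id ℝ X) f fgrad g domg x y
      = if y ∈ domg then ((f x + q y : ℝ) : EReal) else ⊤ := by
    intro y
    rw [GE, FE, extE, BregE, if_pos hx]
    split_ifs with hy
    · rw [show ((f y : ℝ) : EReal) + (g y : ℝ) = ((f y + g y : ℝ) : EReal) from
        (EReal.coe_add _ _).symm, show ∀ a b : ℝ, ((a:ℝ):EReal) + (b:EReal) = ((a+b : ℝ):EReal) from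
        fun a b => (EReal.coe_add _ _).symm]
      rw [EReal.coe_eq_coe_iff]
      simp only [phiGD, phiGDgrad, ContinuousLinearMap.id_apply, hq_def]
      rw [inner_sub_left, real_inner_smul_left]
      have e2 : ‖y - x‖^2 = ⟪y,y⟫ - 2*⟪x,y⟫ + ⟪x,x⟫ := by
        rw [← real_inner_self_eq_norm_sq, inner_sub_left, inner_sub_right, inner_sub_right,
          real_inner_comm y x]
        ring
      rw [inner_sub_right, inner_sub_right, e2]
      field_simp
      ring
    · rw [EReal.coe_add_top]; exact EReal.top_add_coe _
  have hpmem := hp.1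
  have hfinal : FBenvE γ (ContinuousLinearMap.id ℝ X) f fgrad g domg x
      = ((f x + q p : ℝ) : EReal) := by
    apply le_antisymm
    · calc FBenvE γ (ContinuousLinearMap.id ℝ X) f fgrad g domg x
          ≤ GE γ (ContinuousLinearMap.id ℝ X) f fgrad g domg x p := iInf_le _ p
        _ = ((f x + q p : ℝ) : EReal) := by rw [hGE p, if_pos hpmem]
    · apply le_iInf
      intro y
      rw [hGE y]
      split_ifs with hy
      · exact EReal.coe_le_coe_iff.2 (by have := hmin y hy; linarith)
      · exact le_top
  rw [hfinal, hq_def]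

lemma hess_bound {fgrad : X → X} {fh : X →L[ℝ] X} {z xb : X} {ε L : ℝ}
    (h : HasFDerivAt fgrad fh z) (hz : dist z xb < ε)
    (hLip : LipschitzOnWith (Real.toNNReal L) fgrad (Metric.closedBall xb ε)) (hL : 0 ≤ L) :
    ‖fh‖ ≤ L := by
  have hnb : Metric.closedBall xb ε ∈ nhds z :=
    mem_of_superset (Metric.isOpen_ball.mem_nhds (Metric.mem_ball.2 hz))
      Metric.ball_subset_closedBall
  have := h.le_of_lipschitzOn hnb hLip
  rwa [Real.coe_toNNReal _ hL] at this

lemma rhs_bound {H : X →L[ℝ] X} {L γ : ℝ} (hH : ‖H‖ ≤ L) (hγ : 0 < γ) (hγL : γ * L < 1)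
    (w : X) : ((1 - γ * L)/γ) * ‖w‖ ≤ ‖(1/γ) • (w - γ • H w)‖ := by
  have h1 : ‖H w‖ ≤ L * ‖w‖ := le_trans (H.le_opNorm w) (by
    have := norm_nonneg w
    nlinarith)
  have h2 : ‖w - γ • H w‖ ≥ ‖w‖ - γ * ‖H w‖ := by
    have := norm_sub_norm_le w (γ • H w)
    rw [norm_smul, Real.norm_eq_abs, abs_of_pos hγ] at this
    linarith [norm_sub_norm_le w (γ • H w)]
  rw [norm_smul, Real.norm_eq_abs, abs_of_pos (by positivity : (0:ℝ) < 1/γ)]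
  have h3 : ‖w‖ - γ * ‖H w‖ ≥ (1 - γ * L) * ‖w‖ := by nlinarith
  have h4 : (0:ℝ) < 1/γ := by positivity
  calc ((1 - γ * L)/γ) * ‖w‖ = (1/γ) * ((1 - γ * L) * ‖w‖) := by ring
    _ ≤ (1/γ) * (‖w‖ - γ * ‖H w‖) := by nlinarith
    _ ≤ (1/γ) * ‖w - γ • H w‖ := by nlinarith

lemma real_rpow_add_le {a b p : ℝ} (ha : 0 ≤ a) (hb : 0 ≤ b) (hp : 0 ≤ p) (hp1 : p ≤ 1) :
    (a + b) ^ p ≤ a ^ p + b ^ p := by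
  lift a to NNReal using ha
  lift b to NNReal using hb
  have := NNReal.rpow_add_le_add_rpow a b hp hp1
  have h2 : ((((a + b) : NNReal) : ℝ)) ^ p = (((a + b) ^ p : NNReal) : ℝ) := by
    rw [NNReal.coe_rpow]
  rw [← NNReal.coe_add, h2]
  calc (((a + b) ^ p : NNReal) : ℝ) ≤ ((a ^ p + b ^ p : NNReal) : ℝ) := by exact_mod_cast this
    _ = (a:ℝ) ^ p + (b:ℝ) ^ p := by rw [NNReal.coe_add, NNReal.coe_rpow, NNReal.coe_rpow]

end AuxLemmas

set_option maxHeartbeats 4000000 in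
/-- the KL property of `F` with exponent `θ ∈ [1/2, 1)` at `x̄` transfers to
the envelope `F_γ = F_{γ,I}`. -/
theorem KL_transfer_FBE_id
    (f g : X → ℝ) (domg O : Set X) (fgrad : X → X)
    (hdom : domg.Nonempty) (hO : IsOpen O) (hclO : closure domg ⊆ O)
    (hgconv : ConvexOn ℝ domg g) (hgcont : ContinuousOn g domg)
    (hglsc : LowerSemicontinuous (extE g domg))
    (hflsc : LowerSemicontinuous f)
    (hfC2 : ContDiffOn ℝ 2 f O)
    (hfgrad : ∀ z ∈ O, HasGradientAt f (fgrad z) z)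
    (hFlb : ∃ c : ℝ, ∀ z ∈ domg, c ≤ f z + g z)
    (fhess : X → X →L[ℝ] X) (hfhess : ∀ z ∈ O, HasFDerivAt fgrad (fhess z) z)
    (hfhessc : ContinuousOn fhess O)
    (xb : X) (hxb : xb ∈ closure domg)
    (ε : ℝ) (hε : 0 < ε) (hball : Metric.closedBall xb ε ⊆ O)
    (L : ℝ) (hL : 0 < L) (hLipL : LipschitzOnWith (Real.toNNReal L) fgrad (Metric.closedBall xb ε))
    (lamg : ℝ≥0∞) (hlamg : 0 < lamg)
    (hpb : ∀ lam : ℝ, 0 < lam → ENNReal.ofReal lam < lamg →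
      ∃ c : ℝ, ∀ z ∈ domg, c ≤ g z + (1 / (2 * lam)) * ‖z‖ ^ 2)
    (θ : ℝ) (hθ1 : 1/2 ≤ θ) (hθ2 : θ < 1)
    (hKL : ∃ c > (0:ℝ), ∃ δ > (0:ℝ), ∃ ϖ > (0:ℝ),
      ∀ z ∈ Metric.closedBall xb δ ∩ domg,
        f xb + g xb < f z + g z → f z + g z < f xb + g xb + ϖ →
        ∀ v ∈ SubdiffAt g domg z,
          c * (f z + g z - (f xb + g xb)) ^ θ ≤ ‖fgrad z + v‖)
    (γ : ℝ) (hγ : 0 < γ) (hγ1 : ENNReal.ofReal γ < lamg) (hγ2 : γ < 1 / L)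
    (proxg : X → X)
    (hproxg : ∀ u : X, IsProxPt γ (ContinuousLinearMap.id ℝ X) g domg u (proxg u))
    (Fenv : X → ℝ)
    (hFenv : ∀ z ∈ closure domg,
      (Fenv z : EReal) = FBenvE γ (ContinuousLinearMap.id ℝ X) f fgrad g domg z) :
    ∃ c' > (0:ℝ), ∃ δ' > (0:ℝ), ∃ ϖ' > (0:ℝ),
      ∀ z ∈ Metric.closedBall xb δ' ∩ closure domg,
        Fenv xb < Fenv z → Fenv z < Fenv xb + ϖ' →
        c' * (Fenv z - Fenv xb) ^ θ ≤
          ‖(1/γ) • ((z - proxg (z - γ • fgrad z)) -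
            γ • fhess z (z - proxg (z - γ • fgrad z)))‖ := by
  classical
  have hγ' : γ ≠ 0 := ne_of_gt hγ
  have hLnn : 0 ≤ L := hL.le
  have hγL : γ * L < 1 := by
    have h := (div_lt_div_iff_of_pos_right hL).2 hγ2
    have : γ * L < (1/L) * L := by nlinarith
    rwa [one_div, inv_mul_cancel₀ (ne_of_gt hL)] at this
  have hγLnn : 0 ≤ γ * L := by positivity
  -- gradient Lipschitz in explicit form
  have hgradlip : ∀ a ∈ Metric.closedBall xb ε, ∀ b ∈ Metric.closedBall xb ε,
      ‖fgrad a - fgrad b‖ ≤ L * ‖a - b‖ := by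
    intro a ha b hb
    have := hLipL.dist_le_mul a ha b hb
    rwa [dist_eq_norm, dist_eq_norm, Real.coe_toNNReal _ hLnn] at this
  have hxbball : xb ∈ Metric.closedBall xb ε := Metric.mem_closedBall_self hε.le
  -- prox Lipschitz bound
  have hproxlip : ∀ z ∈ Metric.closedBall xb ε,
      ‖proxg (z - γ • fgrad z) - proxg (xb - γ • fgrad xb)‖ ≤ (1 + γ * L) * ‖z - xb‖ := by
    intro z hz
    have h1 := prox_nonexpansive hγ hgconv (hproxg (z - γ • fgrad z))
      (hproxg (xb - γ • fgrad xb))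
    have e1 : (z - γ • fgrad z) - (xb - γ • fgrad xb) = (z - xb) - γ • (fgrad z - fgrad xb) := by
      rw [smul_sub]; abel
    have h2 : ‖(z - γ • fgrad z) - (xb - γ • fgrad xb)‖ ≤ ‖z - xb‖ + γ * ‖fgrad z - fgrad xb‖ := by
      rw [e1]
      calc ‖(z - xb) - γ • (fgrad z - fgrad xb)‖
          ≤ ‖z - xb‖ + ‖γ • (fgrad z - fgrad xb)‖ := norm_sub_le _ _
        _ = ‖z - xb‖ + γ * ‖fgrad z - fgrad xb‖ := by
            rw [norm_smul, Real.norm_eq_abs, abs_of_pos hγ]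
    have h3 := hgradlip z hz xb hxbball
    nlinarith [h1, h2, h3]
  -- case split on stationarity of xb
  by_cases hstat : IsStationaryFB fgrad g domg xb
  · -- STATIONARY CASE
    have hxbm : xb ∈ domg := hstat.1
    have hpfix : proxg (xb - γ • fgrad xb) = xb :=
      prox_fixed hγ hxbm hstat.2 (hproxg (xb - γ • fgrad xb))
    have hFxbE := (hFenv xb hxb).trans
      (FBenv_eq hγ f g domg fgrad hxb (hproxg (xb - γ • fgrad xb)))
    rw [hpfix] at hFxbE
    have hFxb : Fenv xb = f xb + g xb := by
      have h := EReal.coe_eq_coe_iff.1 hFxbE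
      simpa using h
    obtain ⟨c, hc, δ, hδ, ϖ, hϖ, hKL'⟩ := hKL
    -- choose δ'
    obtain ⟨δ', hδ'0, hδ'ε, hδ'δ, hδ'1, hδ'ϖ, hδ'lt⟩ :
        ∃ δ' : ℝ, 0 < δ' ∧ (2 + γ*L)*δ' ≤ ε ∧ (2 + γ*L)*δ' ≤ δ ∧ (2 + γ*L)*δ' ≤ 1 ∧
          L * ((2 + γ*L)*δ')^2 ≤ ϖ/2 ∧ δ' < ε := by
      have hκpos : (0:ℝ) < 2 + γ * L := by nlinarith
      have hsqnn : 0 ≤ ϖ/(2*L) := by positivity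
      have hsqpos : 0 < Real.sqrt (ϖ/(2*L)) := Real.sqrt_pos.2 (by positivity)
      obtain ⟨d, hdpos, hd1, hd2, hd3, hd4⟩ : ∃ d : ℝ, 0 < d ∧ d ≤ ε/(2 + γ*L) ∧
          d ≤ δ/(2 + γ*L) ∧ d ≤ 1/(2 + γ*L) ∧ d ≤ Real.sqrt (ϖ/(2*L))/(2 + γ*L) := by
        refine ⟨min (ε/(2 + γ*L)) (min (δ/(2 + γ*L)) (min (1/(2 + γ*L))
          (Real.sqrt (ϖ/(2*L))/(2 + γ*L)))), ?_, min_le_left _ _,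
          le_trans (min_le_right _ _) (min_le_left _ _),
          le_trans (min_le_right _ _) (le_trans (min_le_right _ _) (min_le_left _ _)),
          le_trans (min_le_right _ _) (le_trans (min_le_right _ _) (min_le_right _ _))⟩
        have := hε
        positivity
      have e1 : (2 + γ*L) * (ε/(2 + γ*L)) = ε := by field_simp
      have e2 : (2 + γ*L) * (δ/(2 + γ*L)) = δ := by field_simp
      have e3 : (2 + γ*L) * (1/(2 + γ*L)) = 1 := by field_simp
      have e4 : (2 + γ*L) * (Real.sqrt (ϖ/(2*L))/(2 + γ*L)) = Real.sqrt (ϖ/(2*L)) := by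
        field_simp
      have m1 := mul_le_mul_of_nonneg_left hd1 hκpos.le
      have m2 := mul_le_mul_of_nonneg_left hd2 hκpos.le
      have m3 := mul_le_mul_of_nonneg_left hd3 hκpos.le
      have m4 := mul_le_mul_of_nonneg_left hd4 hκpos.le
      rw [e1] at m1; rw [e2] at m2; rw [e3] at m3; rw [e4] at m4
      refine ⟨d, hdpos, m1, m2, m3, ?_, ?_⟩
      · have hκd : 0 ≤ (2 + γ*L)*d := by positivity
        have hsq : ((2 + γ*L)*d)^2 ≤ ϖ/(2*L) := by
          have := Real.sq_sqrt hsqnn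
          nlinarith
        have : L * ((2 + γ*L)*d)^2 ≤ L * (ϖ/(2*L)) := by nlinarith
        have e5 : L * (ϖ/(2*L)) = ϖ/2 := by field_simp
        linarith [e5 ▸ this]
      · have h6 : ε/(2 + γ*L) < ε := by
          rw [div_lt_iff₀ hκpos]
          nlinarith
        linarith
    -- the constant K
    have hKpos : 0 < (1/c)*(1/γ + L) + (1/(2*γ) + L)^θ := by
      have h1 : 0 < (1/c)*(1/γ + L) := by positivity
      have h2 : 0 < (1/(2*γ) + L)^θ := Real.rpow_pos_of_pos (by positivity) θ
      linarith
    refine ⟨((1 - γ*L)/γ) / ((1/c)*(1/γ + L) + (1/(2*γ) + L)^θ),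
      div_pos (div_pos (by linarith) hγ) hKpos, δ', hδ'0, ϖ/2, by positivity, ?_⟩
    intro z hz h1 h2
    obtain ⟨hz1, hz2⟩ := hz
    have hzn : ‖z - xb‖ ≤ δ' := by
      rw [← dist_eq_norm]; exact Metric.mem_closedBall.1 hz1
    have hznn : 0 ≤ ‖z - xb‖ := norm_nonneg _
    have hκpos : (0:ℝ) < 2 + γ*L := by nlinarith
    have hzε : z ∈ Metric.closedBall xb ε := by
      rw [Metric.mem_closedBall, dist_eq_norm]
      nlinarith
    have hzεlt : dist z xb < ε := by
      rw [dist_eq_norm]; linarith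
    -- facts about the prox point, then make it opaque
    have hpp := hproxg (z - γ • fgrad z)
    have henvE := (hFenv z hz2).trans (FBenv_eq hγ f g domg fgrad hz2 (hproxg (z - γ • fgrad z)))
    have hplip := hproxlip z hzε
    rw [hpfix] at hplip
    have hv := prox_subdiff hγ hgconv (hproxg (z - γ • fgrad z))
    set p := proxg (z - γ • fgrad z) with hp_def
    clear_value p
    have henv : Fenv z = f z + (g p + ⟪fgrad z, p - z⟫ + (1/(2*γ)) * ‖p - z‖^2) :=
      EReal.coe_eq_coe_iff.1 henvE
    -- geometric bounds
    have hpxb : ‖p - xb‖ ≤ (1 + γ*L) * ‖z - xb‖ := hplip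
    have hw : ‖p - z‖ ≤ (2 + γ*L) * ‖z - xb‖ := by
      calc ‖p - z‖ ≤ ‖p - xb‖ + ‖xb - z‖ := norm_sub_le_norm_sub_add_norm_sub p xb z
        _ = ‖p - xb‖ + ‖z - xb‖ := by rw [norm_sub_rev xb z]
        _ ≤ (2 + γ*L) * ‖z - xb‖ := by nlinarith
    have hwnn : 0 ≤ ‖p - z‖ := norm_nonneg _
    have hwδ' : ‖p - z‖ ≤ (2 + γ*L) * δ' := by nlinarith
    have hw1 : ‖p - z‖ ≤ 1 := by nlinarith
    have hwϖ : L * ‖p - z‖^2 ≤ ϖ/2 := by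
      have hsnn : (0:ℝ) ≤ (2+γ*L)*δ' := by positivity
      have hm := mul_le_mul hwδ' hwδ' hwnn hsnn
      nlinarith [mul_le_mul_of_nonneg_left hm hLnn]
    have hpε : p ∈ Metric.closedBall xb ε := by
      rw [Metric.mem_closedBall, dist_eq_norm]
      nlinarith
    have hpδ : p ∈ Metric.closedBall xb δ := by
      rw [Metric.mem_closedBall, dist_eq_norm]
      nlinarith
    -- Taylor bound
    have htay := taylor_bound f fgrad O hfgrad hball hLipL hLnn hzε hpε
    have htay1 : f p - f z - ⟪fgrad z, p - z⟫ ≤ L * ‖p - z‖^2 := (abs_le.1 htay).2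
    have htay2 : -(L * ‖p - z‖^2) ≤ f p - f z - ⟪fgrad z, p - z⟫ := (abs_le.1 htay).1
    -- decomposition  Fenv z - Fenv xb = A + E
    have hdec : Fenv z - Fenv xb =
        (f p + g p - (f xb + g xb)) +
        (f z + ⟪fgrad z, p - z⟫ - f p + (1/(2*γ)) * ‖p - z‖^2) := by
      rw [henv, hFxb]; ring
    have hEub : f z + ⟪fgrad z, p - z⟫ - f p + (1/(2*γ)) * ‖p - z‖^2
        ≤ (1/(2*γ) + L) * ‖p - z‖^2 := by nlinarith
    have hElb : -(L * ‖p - z‖^2) ≤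
        f z + ⟪fgrad z, p - z⟫ - f p + (1/(2*γ)) * ‖p - z‖^2 := by
      have : 0 ≤ (1/(2*γ)) * ‖p - z‖^2 := by positivity
      nlinarith
    have ht0 : 0 < Fenv z - Fenv xb := by linarith
    have hθ0 : (0:ℝ) ≤ θ := by linarith
    -- subgradient norm bound
    have hvnorm : ‖fgrad p + (1/γ) • ((z - γ • fgrad z) - p)‖ ≤ (L + 1/γ) * ‖p - z‖ := by
      have e : fgrad p + (1/γ) • ((z - γ • fgrad z) - p)
          = (fgrad p - fgrad z) + (1/γ) • (z - p) := by
        rw [show (z - γ • fgrad z) - p = (z - p) - γ • fgrad z by abel, smul_sub, smul_smul,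
          one_div, inv_mul_cancel₀ hγ', one_smul]
        abel
      rw [e]
      have h1 : ‖fgrad p - fgrad z‖ ≤ L * ‖p - z‖ := hgradlip p hpε z hzε
      have h2 : ‖(1/γ) • (z - p)‖ = (1/γ) * ‖p - z‖ := by
        rw [norm_smul, Real.norm_eq_abs, abs_of_pos (by positivity : (0:ℝ) < 1/γ),
          norm_sub_rev]
      calc ‖(fgrad p - fgrad z) + (1/γ) • (z - p)‖
          ≤ ‖fgrad p - fgrad z‖ + ‖(1/γ) • (z - p)‖ := norm_add_le _ _
        _ ≤ (L + 1/γ) * ‖p - z‖ := by rw [h2]; linarith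
    -- F p < F xb + ϖ
    have hFpub : f p + g p < f xb + g xb + ϖ := by
      have : f p + g p = (Fenv z - Fenv xb) + (f xb + g xb)
          - (f z + ⟪fgrad z, p - z⟫ - f p + (1/(2*γ)) * ‖p - z‖^2) := by
        rw [hdec]; ring
      rw [this]
      have := hElb
      nlinarith
    -- key bound : (Fenv z - Fenv xb)^θ ≤ K * ‖p - z‖
    have hkey : (Fenv z - Fenv xb)^θ ≤ ((1/c)*(1/γ + L) + (1/(2*γ) + L)^θ) * ‖p - z‖ := by
      rcases eq_or_lt_of_le hwnn with hw0 | hwpos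
      · -- ‖p - z‖ = 0 : contradiction with ht0
        exfalso
        have hpz : p = z := by
          have := norm_eq_zero.1 hw0.symm
          exact sub_eq_zero.1 this
        have hE0 : f z + ⟪fgrad z, p - z⟫ - f p + (1/(2*γ)) * ‖p - z‖^2 = 0 := by
          rw [hpz]; simp
        have hA0 : 0 < f p + g p - (f xb + g xb) := by
          rw [hdec, hE0] at ht0; linarith
        have hkl := hKL' p ⟨hpδ, hpp.1⟩ (by linarith) (by linarith) _ hv
        have h0 : ‖fgrad p + (1/γ) • ((z - γ • fgrad z) - p)‖ ≤ 0 := by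
          rw [← hw0] at hvnorm; simpa using hvnorm
        have hpowpos : 0 < (f p + g p - (f xb + g xb))^θ := Real.rpow_pos_of_pos hA0 θ
        nlinarith
      · have hpow : (‖p - z‖^2)^θ ≤ ‖p - z‖ := by
          have e1 : (‖p - z‖^2)^θ = ‖p - z‖^((2:ℝ)*θ) := by
            rw [← Real.rpow_natCast ‖p - z‖ 2, ← Real.rpow_mul hwnn]
            norm_num
          rw [e1]
          calc ‖p - z‖^((2:ℝ)*θ) ≤ ‖p - z‖^(1:ℝ) :=
              Real.rpow_le_rpow_of_exponent_ge hwpos hw1 (by linarith)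
            _ = ‖p - z‖ := Real.rpow_one _
        have hcoef : ((1/(2*γ) + L) * ‖p - z‖^2)^θ ≤ (1/(2*γ) + L)^θ * ‖p - z‖ := by
          rw [Real.mul_rpow (by positivity) (by positivity)]
          have h2 : 0 ≤ (1/(2*γ) + L)^θ := (Real.rpow_pos_of_pos (by positivity) θ).le
          nlinarith
        by_cases hA0 : f p + g p ≤ f xb + g xb
        · -- A ≤ 0
          have hts : Fenv z - Fenv xb ≤ (1/(2*γ) + L) * ‖p - z‖^2 := by
            rw [hdec]; nlinarith
          have := Real.rpow_le_rpow ht0.le hts hθ0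
          have h2 : 0 ≤ (1/c)*(1/γ + L) * ‖p - z‖ := by positivity
          nlinarith
        · -- A > 0, apply KL
          push_neg at hA0
          have hkl := hKL' p ⟨hpδ, hpp.1⟩ (by linarith) (by linarith) _ hv
          have hklA : (f p + g p - (f xb + g xb))^θ ≤ (1/c) * ((L + 1/γ) * ‖p - z‖) := by
            have h3 := le_trans hkl hvnorm
            rw [show (1/c) * ((L + 1/γ) * ‖p - z‖) = ((L + 1/γ) * ‖p - z‖)/c by ring,
              le_div_iff₀ hc]
            linarith [h3]
          have hts : Fenv z - Fenv xb ≤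
              (f p + g p - (f xb + g xb)) + (1/(2*γ) + L) * ‖p - z‖^2 := by
            rw [hdec]; linarith
          have hmono := Real.rpow_le_rpow ht0.le hts hθ0
          have hsplit := real_rpow_add_le (le_of_lt (by linarith : (0:ℝ) < f p + g p - (f xb + g xb)))
            (by positivity : (0:ℝ) ≤ (1/(2*γ) + L) * ‖p - z‖^2) hθ0 hθ2.le
          calc (Fenv z - Fenv xb)^θ
              ≤ ((f p + g p - (f xb + g xb)) + (1/(2*γ) + L) * ‖p - z‖^2)^θ := hmono
            _ ≤ (f p + g p - (f xb + g xb))^θ + ((1/(2*γ) + L) * ‖p - z‖^2)^θ := hsplit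
            _ ≤ (1/c) * ((L + 1/γ) * ‖p - z‖) + (1/(2*γ) + L)^θ * ‖p - z‖ := by
                linarith [hklA, hcoef]
            _ ≤ ((1/c)*(1/γ + L) + (1/(2*γ) + L)^θ) * ‖p - z‖ := by nlinarith
    -- conclusion
    have hhb : ‖fhess z‖ ≤ L := hess_bound (hfhess z (hball hzε)) hzεlt hLipL hLnn
    have hrhs := rhs_bound hhb hγ hγL (z - p)
    have hzp : ‖z - p‖ = ‖p - z‖ := norm_sub_rev z p
    rw [hzp] at hrhs
    have hcpos : 0 < ((1 - γ*L)/γ) / ((1/c)*(1/γ + L) + (1/(2*γ) + L)^θ) :=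
      div_pos (div_pos (by linarith) hγ) hKpos
    calc ((1 - γ*L)/γ) / ((1/c)*(1/γ + L) + (1/(2*γ) + L)^θ) * (Fenv z - Fenv xb)^θ
        ≤ ((1 - γ*L)/γ) / ((1/c)*(1/γ + L) + (1/(2*γ) + L)^θ) *
          (((1/c)*(1/γ + L) + (1/(2*γ) + L)^θ) * ‖p - z‖) := by nlinarith [hkey]
      _ = (((1 - γ*L)/γ) / ((1/c)*(1/γ + L) + (1/(2*γ) + L)^θ) *
            ((1/c)*(1/γ + L) + (1/(2*γ) + L)^θ)) * ‖p - z‖ := by ring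
      _ = ((1 - γ*L)/γ) * ‖p - z‖ := by
          rw [div_mul_cancel₀ _ (ne_of_gt hKpos)]
      _ ≤ ‖(1/γ) • (z - p - γ • (fhess z) (z - p))‖ := hrhs
  · -- NONSTATIONARY CASE
    have hm0 : proxg (xb - γ • fgrad xb) ≠ xb := by
      intro he
      apply hstat
      have hv := prox_subdiff hγ hgconv (hproxg (xb - γ • fgrad xb))
      rw [he] at hv
      have e : (1/γ) • ((xb - γ • fgrad xb) - xb) = -fgrad xb := by
        rw [show (xb - γ • fgrad xb) - xb = -(γ • fgrad xb) by abel, smul_neg, smul_smul,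
          one_div, inv_mul_cancel₀ hγ', one_smul]
      rwa [e] at hv
    have hm0pos : 0 < ‖xb - proxg (xb - γ • fgrad xb)‖ := by
      rw [norm_pos_iff, sub_ne_zero]
      exact fun h => hm0 h.symm
    have hκpos : (0:ℝ) < 2 + γ*L := by nlinarith
    set m0 := ‖xb - proxg (xb - γ • fgrad xb)‖ with hm0def
    have hmpos : 0 < ((1 - γ*L)/γ) * (m0/2) :=
      mul_pos (div_pos (by linarith) hγ) (by positivity)
    refine ⟨((1 - γ*L)/γ) * (m0/2), hmpos,
      min (ε/2) (m0/(2*(2 + γ*L))), by positivity, 1, one_pos, ?_⟩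
    intro z hz h1 h2
    obtain ⟨hz1, hz2⟩ := hz
    have hzn : ‖z - xb‖ ≤ min (ε/2) (m0/(2*(2 + γ*L))) := by
      rw [← dist_eq_norm]; exact Metric.mem_closedBall.1 hz1
    have hzn1 : ‖z - xb‖ ≤ ε/2 := le_trans hzn (min_le_left _ _)
    have hzn2 : ‖z - xb‖ ≤ m0/(2*(2 + γ*L)) := le_trans hzn (min_le_right _ _)
    have hznn : 0 ≤ ‖z - xb‖ := norm_nonneg _
    have hzε : z ∈ Metric.closedBall xb ε := by
      rw [Metric.mem_closedBall, dist_eq_norm]; linarith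
    have hzεlt : dist z xb < ε := by rw [dist_eq_norm]; linarith
    have hplip := hproxlip z hzε
    -- lower bound on the residual
    have hres : m0/2 ≤ ‖z - proxg (z - γ • fgrad z)‖ := by
      have e : (xb - proxg (xb - γ • fgrad xb)) - (z - proxg (z - γ • fgrad z))
          = (proxg (z - γ • fgrad z) - proxg (xb - γ • fgrad xb)) - (z - xb) := by abel
      have h3 : ‖(xb - proxg (xb - γ • fgrad xb)) - (z - proxg (z - γ • fgrad z))‖
          ≤ (2 + γ*L) * ‖z - xb‖ := by
        rw [e]
        calc ‖(proxg (z - γ • fgrad z) - proxg (xb - γ • fgrad xb)) - (z - xb)‖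
            ≤ ‖proxg (z - γ • fgrad z) - proxg (xb - γ • fgrad xb)‖ + ‖z - xb‖ :=
              norm_sub_le _ _
          _ ≤ (2 + γ*L) * ‖z - xb‖ := by nlinarith
      have h4 : (2 + γ*L) * ‖z - xb‖ ≤ m0/2 := by
        have := mul_le_mul_of_nonneg_left hzn2 hκpos.le
        calc (2 + γ*L) * ‖z - xb‖ ≤ (2 + γ*L) * (m0/(2*(2 + γ*L))) := this
          _ = m0/2 := by field_simp
      have h5 := norm_sub_norm_le (xb - proxg (xb - γ • fgrad xb)) (z - proxg (z - γ • fgrad z))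
      rw [← hm0def] at h5
      linarith
    -- conclude
    have hhb : ‖fhess z‖ ≤ L := hess_bound (hfhess z (hball hzε)) hzεlt hLipL hLnn
    have hrhs := rhs_bound hhb hγ hγL (z - proxg (z - γ • fgrad z))
    have hθ0 : (0:ℝ) ≤ θ := by linarith
    have hpow1 : (Fenv z - Fenv xb)^θ ≤ 1 :=
      Real.rpow_le_one (by linarith) (by linarith) hθ0
    have hm : 0 < ((1 - γ*L)/γ) := div_pos (by linarith) hγ
    calc ((1 - γ*L)/γ) * (m0/2) * (Fenv z - Fenv xb)^θ
        ≤ ((1 - γ*L)/γ) * (m0/2) := by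
          have hpp : 0 < ((1 - γ*L)/γ) * (m0/2) := by positivity
          nlinarith [Real.rpow_pos_of_pos (show (0:ℝ) < Fenv z - Fenv xb by linarith) θ]
      _ ≤ ((1 - γ*L)/γ) * ‖z - proxg (z - γ • fgrad z)‖ := by nlinarith
      _ ≤ ‖(1/γ) • (z - proxg (z - γ • fgrad z) -
            γ • (fhess z) (z - proxg (z - γ • fgrad z)))‖ := hrhs
end
end
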